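/- Let X be a sequentially complete Hausdorff locally convex topological vector space over ℂ (every Cauchy sequence in X converges), let (a_n)_{n≥1} be a sequence in X and s₀ ∈ ℂ. If the Dirichlet series Σ_n a_n n^{−s₀} converges in X, then for every s ∈ ℂ with Re s > Re s₀ the series Σ_n a_n n^{−s} converges in X. -/

import Mathlib

open Filter Finset Topology

private lemma seminorm_sum_le' {X : Type*} [AddCommGroup X] [Module ℂ X] (q : Seminorm ℂ X)
    (s : Finset ℕ) (f : ℕ → X) : q (∑ i ∈ s, f i) ≤ ∑ i ∈ s, q (f i) := by
  classical
  induction s using Finset.cons_induction with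
  | empty => simp
  | cons j s hj ih =>
    rw [Finset.sum_cons, Finset.sum_cons]
    exact le_trans (map_add_le_add q _ _) (by linarith)

private lemma cpow_diff_bound' (w : ℂ) (hw : 0 < w.re) (n : ℕ) :
    ‖(((n + 2 : ℕ) : ℂ)) ^ (-w) - (((n + 1 : ℕ) : ℂ)) ^ (-w)‖
      ≤ ‖w‖ * ((n : ℝ) + 1) ^ (-(w.re + 1)) := by
  have key : ∀ x ∈ Set.Icc ((n : ℝ) + 1) ((n : ℝ) + 2),
      HasDerivWithinAt (fun t : ℝ => ((t : ℂ)) ^ (-w))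
        (-w * ((x : ℂ)) ^ (-w - 1)) (Set.Icc ((n : ℝ) + 1) ((n : ℝ) + 2)) x := by
    intro x hx
    have hx0 : (0 : ℝ) < x := lt_of_lt_of_le (by positivity) hx.1
    have h2 : HasDerivAt (fun t : ℝ => ((t : ℂ)) ^ (-w)) (-w * ((x : ℂ)) ^ (-w - 1)) x :=
      (Complex.hasStrictDerivAt_cpow_const
        (Complex.ofReal_mem_slitPlane.2 hx0)).hasDerivAt.comp_ofReal
    exact h2.hasDerivWithinAt
  have bound : ∀ x ∈ Set.Icc ((n : ℝ) + 1) ((n : ℝ) + 2),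
      ‖-w * ((x : ℂ)) ^ (-w - 1)‖ ≤ ‖w‖ * ((n : ℝ) + 1) ^ (-(w.re + 1)) := by
    intro x hx
    have hx0 : (0 : ℝ) < x := lt_of_lt_of_le (by positivity) hx.1
    rw [norm_mul, norm_neg,
      Complex.norm_cpow_eq_rpow_re_of_pos hx0]
    have hre : (-w - 1).re = -(w.re + 1) := by simp; ring
    rw [hre]
    exact mul_le_mul_of_nonneg_left
      (Real.rpow_le_rpow_of_nonpos (by positivity) hx.1 (by linarith))
      (norm_nonneg w)
  have := (convex_Icc ((n : ℝ) + 1) ((n : ℝ) + 2)).norm_image_sub_le_of_norm_hasDerivWithin_le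
    key bound (Set.left_mem_Icc.2 (by linarith)) (Set.right_mem_Icc.2 (by linarith))
  rw [show ((n : ℝ) + 2) - ((n : ℝ) + 1) = 1 by ring, norm_one, mul_one] at this
  have hcast1 : (((n : ℝ) + 2 : ℝ) : ℂ) = ((n + 2 : ℕ) : ℂ) := by push_cast; ring
  have hcast2 : (((n : ℝ) + 1 : ℝ) : ℂ) = ((n + 1 : ℕ) : ℂ) := by push_cast; ring
  rw [hcast1, hcast2] at this
  simpa using this

private lemma summable_aux' (r : ℝ) (hr : 0 < r) :
    Summable (fun n : ℕ => ((n : ℝ) + 1) ^ (-(r + 1))) := by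
  have h1 : Summable (fun n : ℕ => (n : ℝ) ^ (-(r + 1))) :=
    Real.summable_nat_rpow.2 (by linarith)
  have h2 := (summable_nat_add_iff 1).2 h1
  simpa using h2

/-- If a Dirichlet series with coefficients in a sequentially complete Hausdorff locally
convex space converges at `s₀`, then it converges at every `s` with `Re s > Re s₀`. -/
theorem dirichlet_converges_of_re_gt
    {X : Type*} [AddCommGroup X] [Module ℂ X] [UniformSpace X] [IsUniformAddGroup X]
    [ContinuousSMul ℂ X] [T2Space X] [Module ℝ X] [IsScalarTower ℝ ℂ X]
    [LocallyConvexSpace ℝ X]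
    (hseq : ∀ u : ℕ → X, CauchySeq u → ∃ x : X, Tendsto u atTop (𝓝 x))
    (a : ℕ → X) (s₀ : ℂ)
    (h : ∃ L : X, Tendsto
      (fun N : ℕ => ∑ n ∈ Finset.range N, (((n + 1 : ℕ) : ℂ) ^ (-s₀)) • a (n + 1))
      atTop (𝓝 L))
    (s : ℂ) (hs : s₀.re < s.re) :
    ∃ L : X, Tendsto
      (fun N : ℕ => ∑ n ∈ Finset.range N, (((n + 1 : ℕ) : ℂ) ^ (-s)) • a (n + 1))
      atTop (𝓝 L) := by
  classical
  obtain ⟨L, hL⟩ := h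
  haveI : ContinuousSMul ℝ X := by
    refine ⟨?_⟩
    have heq : (fun p : ℝ × X => p.1 • p.2) = fun p : ℝ × X => ((p.1 : ℂ)) • p.2 := by
      funext p
      rw [show ((p.1 : ℂ)) = p.1 • (1 : ℂ) by simp [Complex.real_smul], smul_assoc, one_smul]
    rw [heq]
    exact (Complex.continuous_ofReal.comp continuous_fst).smul continuous_snd
  set w : ℂ := s - s₀ with hw_def
  have hw : 0 < w.re := by
    rw [hw_def, Complex.sub_re]; linarith
  let b : ℕ → X := fun n => (((n + 1 : ℕ) : ℂ) ^ (-s₀)) • a (n + 1)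
  let c : ℕ → ℂ := fun n => (((n + 1 : ℕ) : ℂ)) ^ (-w)
  let S : ℕ → X := fun N => ∑ n ∈ Finset.range N, b n
  let u : ℕ → X := fun N => ∑ n ∈ Finset.range N, c n • b n
  have hLS : Tendsto S atTop (𝓝 L) := hL
  have hterm : ∀ n : ℕ, (((n + 1 : ℕ) : ℂ) ^ (-s)) • a (n + 1) = c n • b n := by
    intro n
    have hne : ((n + 1 : ℕ) : ℂ) ≠ 0 := Nat.cast_ne_zero.2 (Nat.succ_ne_zero n)
    have hsplit : (-s) = (-w) + (-s₀) := by rw [hw_def]; ring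
    rw [hsplit, Complex.cpow_add _ _ hne, mul_smul]
  suffices hu : ∃ L' : X, Tendsto u atTop (𝓝 L') by
    obtain ⟨L', hL'⟩ := hu
    refine ⟨L', hL'.congr fun N => ?_⟩
    exact Finset.sum_congr rfl fun n _ => (hterm n).symm
  -- seminorms
  open ComplexOrder in
  haveI : LocallyConvexSpace ℂ X := by
    rw [locallyConvexSpace_iff_exists_convex_subset_zero]
    intro U hU
    obtain ⟨S, hS, hSc, hSU⟩ :=
      (locallyConvexSpace_iff_exists_convex_subset_zero ℝ X).1 inferInstance U hU
    exact ⟨S, hS, convex_RCLike_iff_convex_real.2 hSc, hSU⟩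
  have hq := with_gaugeSeminormFamily (𝕜 := ℂ) (E := X)
  set q := gaugeSeminormFamily ℂ X with hq_def
  -- Abel summation identity
  have habel : ∀ M N : ℕ, M ≤ N →
      u N - u M = c N • (S N - L) - c M • (S M - L)
        + ∑ n ∈ Finset.Ico M N, (c n - c (n + 1)) • (S (n + 1) - L) := by
    intro M N hMN
    induction N, hMN using Nat.le_induction with
    | base => simp
    | succ N hMN ih =>
      rw [Finset.sum_Ico_succ_top hMN]
      have h1 : u (N + 1) = u N + c N • b N := Finset.sum_range_succ _ _
      have h2 : S (N + 1) = S N + b N := Finset.sum_range_succ _ _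
      rw [h1, h2]
      linear_combination (norm := module) ih
  -- norm bounds on c
  have hc_le : ∀ n : ℕ, ‖c n‖ ≤ 1 := by
    intro n
    have : ‖c n‖ = ((n + 1 : ℕ) : ℝ) ^ ((-w).re) :=
      Complex.norm_natCast_cpow_of_pos (Nat.succ_pos n) _
    rw [this]
    exact Real.rpow_le_one_of_one_le_of_nonpos
      (by exact_mod_cast Nat.succ_le_of_lt (Nat.succ_pos n))
      (by rw [Complex.neg_re]; linarith)
  have hc_diff : ∀ n : ℕ, ‖c n - c (n + 1)‖ ≤ ‖w‖ * ((n : ℝ) + 1) ^ (-(w.re + 1)) := by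
    intro n
    have := cpow_diff_bound' w hw n
    rw [norm_sub_rev]
    exact this
  -- summability and the constant
  have hsum : Summable (fun n : ℕ => ((n : ℝ) + 1) ^ (-(w.re + 1))) := summable_aux' _ hw
  set C : ℝ := ‖w‖ * ∑' n : ℕ, ((n : ℝ) + 1) ^ (-(w.re + 1)) with hC_def
  have hC0 : 0 ≤ C := by
    apply mul_nonneg (norm_nonneg _)
    exact tsum_nonneg fun n => Real.rpow_nonneg (by positivity) _
  -- Cauchy
  apply hseq
  rw [cauchySeq_iff_tendsto, uniformity_eq_comap_nhds_zero X, tendsto_comap_iff]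
  have hcomp : ((fun p : X × X => p.2 - p.1) ∘ Prod.map u u)
      = fun p : ℕ × ℕ => u p.2 - u p.1 := rfl
  rw [hcomp, hq.tendsto_nhds]
  intro i ε hε
  set ε' : ℝ := ε / (C + 3) with hε'_def
  have hε' : 0 < ε' := div_pos hε (by linarith)
  -- find M₀
  have hT := (hq.tendsto_nhds S L).1 hLS i ε' hε'
  rw [eventually_atTop] at hT
  obtain ⟨M₀, hM₀⟩ := hT
  -- main estimate
  have key : ∀ m n : ℕ, M₀ ≤ m → m ≤ n → q i (u n - u m) < ε := by
    intro m n hm hmn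
    rw [habel m n hmn]
    have e1 : q i (c n • (S n - L)) ≤ ε' := by
      rw [map_smul_eq_mul]
      calc ‖c n‖ * q i (S n - L) ≤ 1 * ε' := by
            apply mul_le_mul (hc_le n) (le_of_lt (hM₀ n (le_trans hm hmn)))
              (apply_nonneg _ _) zero_le_one
        _ = ε' := one_mul _
    have e2 : q i (c m • (S m - L)) ≤ ε' := by
      rw [map_smul_eq_mul]
      calc ‖c m‖ * q i (S m - L) ≤ 1 * ε' := by
            apply mul_le_mul (hc_le m) (le_of_lt (hM₀ m hm)) (apply_nonneg _ _) zero_le_one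
        _ = ε' := one_mul _
    have e3 : q i (∑ k ∈ Finset.Ico m n, (c k - c (k + 1)) • (S (k + 1) - L)) ≤ C * ε' := by
      refine le_trans (seminorm_sum_le' _ _ _) ?_
      have step : ∀ k ∈ Finset.Ico m n,
          q i ((c k - c (k + 1)) • (S (k + 1) - L))
            ≤ (‖w‖ * ((k : ℝ) + 1) ^ (-(w.re + 1))) * ε' := by
        intro k hk
        rw [map_smul_eq_mul]
        apply mul_le_mul (hc_diff k)
          (le_of_lt (hM₀ (k + 1) (le_trans hm (le_trans (Finset.mem_Ico.1 hk).1 (Nat.le_succ k)))))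
          (apply_nonneg _ _)
        positivity
      refine le_trans (Finset.sum_le_sum step) ?_
      rw [← Finset.sum_mul]
      apply mul_le_mul_of_nonneg_right _ (le_of_lt hε')
      rw [hC_def, ← Finset.mul_sum]
      apply mul_le_mul_of_nonneg_left _ (norm_nonneg w)
      exact hsum.sum_le_tsum _ (fun k _ => Real.rpow_nonneg (by positivity) _)
    calc q i (c n • (S n - L) - c m • (S m - L)
          + ∑ k ∈ Finset.Ico m n, (c k - c (k + 1)) • (S (k + 1) - L))
        ≤ q i (c n • (S n - L) - c m • (S m - L))
          + q i (∑ k ∈ Finset.Ico m n, (c k - c (k + 1)) • (S (k + 1) - L)) :=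
          map_add_le_add _ _ _
      _ ≤ (q i (c n • (S n - L)) + q i (c m • (S m - L)))
          + q i (∑ k ∈ Finset.Ico m n, (c k - c (k + 1)) • (S (k + 1) - L)) := by
          gcongr
          exact map_sub_le_add _ _ _
      _ ≤ (ε' + ε') + C * ε' := by gcongr
      _ = (C + 2) * ε' := by ring
      _ < (C + 3) * ε' := by nlinarith
      _ = ε := by rw [hε'_def]; field_simp
  rw [eventually_atTop]
  refine ⟨(M₀, M₀), fun p hp => ?_⟩
  have hp1 : M₀ ≤ p.1 := hp.1
  have hp2 : M₀ ≤ p.2 := hp.2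
  rw [sub_zero]
  rcases le_total p.1 p.2 with hle | hle
  · exact key p.1 p.2 hp1 hle
  · rw [← neg_sub, map_neg_eq_map]
    exact key p.2 p.1 hp2 hle
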